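/- Let d ≥ 1 and let Q be a quadratic form on ℝ^d whose polar bilinear form B(u,w) = Q(u+w) − Q(u) − Q(w) is nondegenerate. Then there exist α > 0 and C > 0 such that for every t with 0 < t < 1: λ( { v ∈ ℝ^d : max_i |v_i| ≤ 1 and |Q(v)| ≤ t } ) ≤ C · t^α, where λ is Lebesgue measure on ℝ^d. (Lemma 10.2 of the paper, archimedean case F = ℝ.) -/

import Mathlib

open MeasureTheory

noncomputable section

lemma oneD_quad_bound (a b c t : ℝ) (ha : a ≠ 0) (ht : 0 ≤ t) :
    volume {x : ℝ | |a * x ^ 2 + b * x + c| ≤ t} ≤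
      ENNReal.ofReal (4 * Real.sqrt (t / |a|)) := by
  have hA : 0 < |a| := abs_pos.mpr ha
  set h := b / (2 * a) with hh
  set k := h ^ 2 - c / a with hk
  set r := t / |a| with hr
  have hr0 : 0 ≤ r := div_nonneg ht hA.le
  set β := Real.sqrt (k + r) with hβ
  set γ := Real.sqrt (max (k - r) 0) with hγ
  have hsub : {x : ℝ | |a * x ^ 2 + b * x + c| ≤ t} ⊆
      Set.Icc (-h - β) (-h - γ) ∪ Set.Icc (-h + γ) (-h + β) := by
    intro x hx
    simp only [Set.mem_setOf_eq] at hx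
    have key : a * x ^ 2 + b * x + c = a * ((x + h) ^ 2 - k) := by
      have e1 : (x + h) ^ 2 - k = x ^ 2 + 2 * h * x + c / a := by rw [hk]; ring
      have h2ah : a * (2 * h) = b := by rw [hh]; field_simp
      have hca : a * (c / a) = c := by field_simp
      have e2 : a * (x ^ 2 + 2 * h * x + c / a) = a * x ^ 2 + (a * (2 * h)) * x + a * (c / a) := by
        ring
      rw [e1, e2, h2ah, hca]
    have h1 : |(x + h) ^ 2 - k| ≤ r := by
      rw [hr, le_div_iff₀ hA]
      calc |(x + h) ^ 2 - k| * |a| = |a * ((x + h) ^ 2 - k)| := by rw [abs_mul]; ring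
        _ ≤ t := by rw [← key]; exact hx
    obtain ⟨h1a, h1b⟩ := abs_le.mp h1
    have h2 : (x + h) ^ 2 ≤ k + r := by linarith
    have h3 : max (k - r) 0 ≤ (x + h) ^ 2 := max_le (by linarith) (sq_nonneg _)
    have hb : |x + h| ≤ β := by
      rw [hβ, ← Real.sqrt_sq_eq_abs]; exact Real.sqrt_le_sqrt h2
    have hg : γ ≤ |x + h| := by
      rw [hγ, ← Real.sqrt_sq_eq_abs]; exact Real.sqrt_le_sqrt h3
    obtain ⟨hb1, hb2⟩ := abs_le.mp hb
    rcases le_abs.mp hg with hc | hc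
    · right; rw [Set.mem_Icc]; exact ⟨by linarith, by linarith⟩
    · left; rw [Set.mem_Icc]; exact ⟨by linarith, by linarith⟩
  have hγ0 : 0 ≤ γ := Real.sqrt_nonneg _
  have hβ0 : 0 ≤ β := Real.sqrt_nonneg _
  have hsr0 : 0 ≤ Real.sqrt r := Real.sqrt_nonneg _
  have hbg : β - γ ≤ 2 * Real.sqrt r := by
    rcases le_or_gt (k + r) 0 with hkr | hkr
    · have hb0 : β = 0 := by rw [hβ]; exact Real.sqrt_eq_zero'.mpr hkr
      linarith
    · have hβ2 : β ^ 2 = k + r := Real.sq_sqrt hkr.le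
      have hγ2 : γ ^ 2 = max (k - r) 0 := Real.sq_sqrt (le_max_right _ _)
      have hgb : γ ≤ β := by
        rw [hβ, hγ]; exact Real.sqrt_le_sqrt (max_le (by linarith) hkr.le)
      have hsq : (β - γ) ^ 2 ≤ 2 * r := by
        have h4 : k - r ≤ max (k - r) 0 := le_max_left _ _
        nlinarith
      have h5 : β - γ ≤ Real.sqrt (2 * r) := by
        rw [show β - γ = Real.sqrt ((β - γ) ^ 2) from (Real.sqrt_sq (by linarith)).symm]
        exact Real.sqrt_le_sqrt hsq
      have h6 : Real.sqrt (2 * r) ≤ 2 * Real.sqrt r := by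
        calc Real.sqrt (2 * r) ≤ Real.sqrt (2 ^ 2 * r) := Real.sqrt_le_sqrt (by nlinarith)
          _ = 2 * Real.sqrt r := by
              rw [Real.sqrt_mul (by positivity) r, Real.sqrt_sq (by norm_num : (0:ℝ) ≤ 2)]
      linarith
  calc volume {x : ℝ | |a * x ^ 2 + b * x + c| ≤ t}
      ≤ volume (Set.Icc (-h - β) (-h - γ) ∪ Set.Icc (-h + γ) (-h + β)) := measure_mono hsub
    _ ≤ volume (Set.Icc (-h - β) (-h - γ)) + volume (Set.Icc (-h + γ) (-h + β)) :=
        measure_union_le _ _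
    _ = ENNReal.ofReal (β - γ) + ENNReal.ofReal (β - γ) := by
        rw [Real.volume_Icc, Real.volume_Icc, show -h - γ - (-h - β) = β - γ by ring,
          show -h + β - (-h + γ) = β - γ by ring]
    _ ≤ ENNReal.ofReal (2 * Real.sqrt r) + ENNReal.ofReal (2 * Real.sqrt r) :=
        add_le_add (ENNReal.ofReal_le_ofReal hbg) (ENNReal.ofReal_le_ofReal hbg)
    _ = ENNReal.ofReal (4 * Real.sqrt r) := by
        rw [← ENNReal.ofReal_add (by positivity) (by positivity)]; ring_nf

lemma quadform_continuous {d : ℕ} (Q : QuadraticForm ℝ (Fin d → ℝ)) : Continuous Q := by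
  have hrep : ∀ v : Fin d → ℝ,
      Q v = (∑ i, v i * ∑ j, v j * QuadraticMap.polar (⇑Q) (Pi.single j 1) (Pi.single i 1)) / 2 := by
    intro v
    have h1 : (QuadraticMap.polarBilin Q v) v = 2 * Q v := by
      rw [QuadraticMap.polarBilin_apply_apply, QuadraticMap.polar_self]
      simp [two_smul]; ring
    have hv : (∑ i, v i • (Pi.single i 1 : Fin d → ℝ)) = v := by
      ext j
      simp [Finset.sum_apply, Pi.single_apply]
    have h2 : (QuadraticMap.polarBilin Q v) v
        = ∑ i, v i * ∑ j, v j * QuadraticMap.polar (⇑Q) (Pi.single j 1) (Pi.single i 1) := by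
      conv_lhs => rw [← hv]
      rw [map_sum]
      simp [LinearMap.sum_apply, _root_.map_smul, LinearMap.smul_apply, smul_eq_mul,
        Finset.mul_sum]
    rw [h2] at h1
    linarith
  rw [show ⇑Q = fun v =>
      (∑ i, v i * ∑ j, v j * QuadraticMap.polar (⇑Q) (Pi.single j 1) (Pi.single i 1)) / 2
    from funext hrep]
  exact (continuous_finset_sum _ fun i _ => (continuous_apply i).mul
    (continuous_finset_sum _ fun j _ => (continuous_apply j).mul continuous_const)).div_const 2

/-- Lemma 10.2 (archimedean case `F = ℝ`). -/
theorem stmt18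
    (d : ℕ) (hd : 1 ≤ d) (Q : QuadraticForm ℝ (Fin d → ℝ))
    (hQ : ∀ u, (∀ w, QuadraticMap.polar (⇑Q) u w = 0) → u = 0) :
    ∃ α : ℝ, 0 < α ∧ ∃ C : ℝ, 0 < C ∧
      ∀ t : ℝ, 0 < t → t < 1 →
        volume {v : Fin d → ℝ | ‖v‖ ≤ 1 ∧ |Q v| ≤ t} ≤ ENNReal.ofReal (C * t ^ α) := by
  obtain ⟨n, rfl⟩ : ∃ n, d = n + 1 := ⟨d - 1, (Nat.succ_pred_eq_of_pos hd).symm⟩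
  -- find a vector with Q u ≠ 0
  have h0 : ∃ u : Fin (n + 1) → ℝ, Q u ≠ 0 := by
    by_contra hcon
    push_neg at hcon
    have h1 : (Pi.single (0 : Fin (n + 1)) (1 : ℝ) : Fin (n + 1) → ℝ) = 0 := by
      refine hQ _ fun w => ?_
      simp [QuadraticMap.polar, hcon]
    have h2 := congrFun h1 0
    simp at h2
  obtain ⟨u, hu⟩ := h0
  have hu0 : u ≠ 0 := by
    intro h
    apply hu
    rw [h]
    exact QuadraticMap.map_zero Q
  -- a basis whose 0-th vector is u
  have li : LinearIndepOn ℝ id ({u} : Set (Fin (n + 1) → ℝ)) :=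
    LinearIndepOn.singleton hu0
  let b0 := Module.Basis.extend li
  haveI : Fintype (li.extend (Set.subset_univ _)) := FiniteDimensional.fintypeBasisIndex b0
  have hcard : Fintype.card (li.extend (Set.subset_univ _)) = n + 1 := by
    have h1 := Module.finrank_eq_card_basis b0
    rw [Module.finrank_fintype_fun_eq_card, Fintype.card_fin] at h1
    exact h1.symm
  let e0 : Fin (n + 1) ≃ (li.extend (Set.subset_univ _)) :=
    (Fintype.equivFinOfCardEq hcard).symm
  have humem : u ∈ li.extend (Set.subset_univ _) := li.subset_extend _ rfl
  let e1 : Fin (n + 1) ≃ (li.extend (Set.subset_univ _)) :=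
    (Equiv.swap (0 : Fin (n + 1)) (e0.symm ⟨u, humem⟩)).trans e0
  let b : Module.Basis (Fin (n + 1)) ℝ (Fin (n + 1) → ℝ) := b0.reindex e1.symm
  have hb0 : b 0 = u := by
    simp only [b, Module.Basis.reindex_apply, Equiv.symm_symm, e1, Equiv.trans_apply,
      Equiv.swap_apply_left, Equiv.apply_symm_apply]
    exact Module.Basis.extend_apply_self li ⟨u, humem⟩
  let T : (Fin (n + 1) → ℝ) ≃ₗ[ℝ] (Fin (n + 1) → ℝ) :=
    (Pi.basisFun ℝ (Fin (n + 1))).equiv b (Equiv.refl _)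
  have hT0 : T (Pi.single 0 1) = u := by
    have h1 : (Pi.basisFun ℝ (Fin (n + 1))) 0 = Pi.single 0 1 := Pi.basisFun_apply ℝ (Fin (n + 1)) 0
    rw [← h1]
    show (Pi.basisFun ℝ (Fin (n + 1))).equiv b (Equiv.refl _) ((Pi.basisFun ℝ (Fin (n + 1))) 0) = u
    rw [Module.Basis.equiv_apply]
    simpa using hb0
  -- bound constants
  let Tc : (Fin (n + 1) → ℝ) →L[ℝ] (Fin (n + 1) → ℝ) :=
    LinearMap.toContinuousLinearMap (T.symm : (Fin (n + 1) → ℝ) →ₗ[ℝ] (Fin (n + 1) → ℝ))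
  let M : ℝ := ‖Tc‖
  have hM0 : 0 ≤ M := norm_nonneg _
  have hM : ∀ w : Fin (n + 1) → ℝ, ‖T w‖ ≤ 1 → ‖w‖ ≤ M := by
    intro w hw
    have h1 : Tc (T w) = w := T.symm_apply_apply w
    calc ‖w‖ = ‖Tc (T w)‖ := by rw [h1]
      _ ≤ ‖Tc‖ * ‖T w‖ := Tc.le_opNorm _
      _ ≤ M * 1 := by apply mul_le_mul_of_nonneg_left hw (norm_nonneg _)
      _ = M := mul_one M
  have hQcont : Continuous Q := quadform_continuous Q
  have hTcont : Continuous T := LinearMap.continuous_of_finiteDimensional T.toLinearMap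
  set A : ℝ := Q u with hA
  have hAne : A ≠ 0 := hu
  have hAs : 0 < Real.sqrt |A| := Real.sqrt_pos.mpr (abs_pos.mpr hAne)
  set D : ℝ := |LinearMap.det (T.toLinearMap)| with hD
  have hD0 : 0 ≤ D := abs_nonneg _
  set K : ℝ := (volume (Metric.closedBall (0 : Fin n → ℝ) M)).toReal with hK
  have hKfin : volume (Metric.closedBall (0 : Fin n → ℝ) M) ≠ ⊤ :=
    measure_closedBall_lt_top.ne
  have hK0 : 0 ≤ K := ENNReal.toReal_nonneg
  refine ⟨1 / 2, by norm_num, D * 4 * K / Real.sqrt |A| + 1, by positivity, ?_⟩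
  intro t ht ht1
  -- change of variables
  have hvol1 : volume {v : Fin (n + 1) → ℝ | ‖v‖ ≤ 1 ∧ |Q v| ≤ t}
      = ENNReal.ofReal D *
        volume (T ⁻¹' {v : Fin (n + 1) → ℝ | ‖v‖ ≤ 1 ∧ |Q v| ≤ t}) := by
    have himg := Measure.addHaar_image_linearMap volume T.toLinearMap
      (⇑T ⁻¹' {v : Fin (n + 1) → ℝ | ‖v‖ ≤ 1 ∧ |Q v| ≤ t})
    rw [LinearEquiv.coe_coe] at himg
    rw [Set.image_preimage_eq _ T.surjective] at himg
    exact himg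
  set A' : Set (Fin (n + 1) → ℝ) := {w | ‖w‖ ≤ M ∧ |Q (T w)| ≤ t} with hA'
  have hsub1 : T ⁻¹' {v : Fin (n + 1) → ℝ | ‖v‖ ≤ 1 ∧ |Q v| ≤ t} ⊆ A' := by
    intro w hw
    obtain ⟨hw1, hw2⟩ := hw
    exact ⟨hM w hw1, hw2⟩
  have hA'meas : MeasurableSet A' := by
    have : A' = {w : Fin (n + 1) → ℝ | ‖w‖ ≤ M} ∩ {w | |Q (T w)| ≤ t} := by
      ext w; simp [hA', Set.mem_setOf_eq]
    rw [this]
    exact ((isClosed_le continuous_norm continuous_const).measurableSet).inter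
      ((isClosed_le ((hQcont.comp hTcont).abs) continuous_const).measurableSet)
  -- Fubini
  let e := MeasurableEquiv.piFinSuccAbove (fun _ : Fin (n + 1) => ℝ) 0
  have hmp : MeasurePreserving e.symm volume volume :=
    (volume_preserving_piFinSuccAbove (fun _ : Fin (n + 1) => ℝ) 0).symm _
  have hcons : ∀ (x : ℝ) (y : Fin n → ℝ), e.symm (x, y) = Fin.cons x y := by
    intro x y
    show (Fin.insertNthEquiv (fun _ : Fin (n + 1) => ℝ) 0) (x, y) = Fin.cons x y
    simp [Fin.insertNthEquiv, Fin.insertNth_zero']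
  have hvol2 : volume A' = ∫⁻ y, volume {x : ℝ | Fin.cons x y ∈ A'} := by
    rw [← hmp.measure_preimage hA'meas.nullMeasurableSet]
    rw [Measure.volume_eq_prod, Measure.prod_apply_symm (hA'meas.preimage e.symm.measurable)]
    congr 1
    ext y
    congr 1
    ext x
    simp [hcons]
  -- decomposition of cons
  have hdec : ∀ (x : ℝ) (y : Fin n → ℝ),
      (Fin.cons x y : Fin (n + 1) → ℝ) = x • (Pi.single (0 : Fin (n + 1)) (1 : ℝ) : Fin (n + 1) → ℝ)
        + (Fin.cons (0 : ℝ) y : Fin (n + 1) → ℝ) := by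
    intro x y
    ext j
    refine Fin.cases ?_ (fun i => ?_) j
    · simp
    · simp [Pi.single_eq_of_ne (Fin.succ_ne_zero i)]
  have hg : ∀ (x : ℝ) (y : Fin n → ℝ),
      Q (T (Fin.cons x y)) = A * x ^ 2
        + QuadraticMap.polar (⇑Q) u (T (Fin.cons 0 y)) * x + Q (T (Fin.cons 0 y)) := by
    intro x y
    rw [hdec, map_add, LinearEquiv.map_smul, hT0]
    rw [QuadraticMap.map_add (⇑Q) (x • u) (T (Fin.cons (0 : ℝ) y)),
      QuadraticMap.map_smul, QuadraticMap.polar_smul_left]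
    simp only [smul_eq_mul, hA]
    ring
  -- bound each section
  have hsec : ∀ y : Fin n → ℝ, volume {x : ℝ | Fin.cons x y ∈ A'} ≤
      Set.indicator (Metric.closedBall (0 : Fin n → ℝ) M)
        (fun _ => ENNReal.ofReal (4 * Real.sqrt (t / |A|))) y := by
    intro y
    by_cases hy : y ∈ Metric.closedBall (0 : Fin n → ℝ) M
    · rw [Set.indicator_of_mem hy]
      refine le_trans (measure_mono ?_) (oneD_quad_bound A
        (QuadraticMap.polar (⇑Q) u (T (Fin.cons 0 y))) (Q (T (Fin.cons 0 y))) t hAne ht.le)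
      intro x hx
      have := hx.2
      rw [hg x y] at this
      exact this
    · rw [Set.indicator_of_notMem hy]
      have hempty : {x : ℝ | Fin.cons x y ∈ A'} = ∅ := by
        rw [Set.eq_empty_iff_forall_notMem]
        intro x hx
        have hx' : ‖(Fin.cons x y : Fin (n + 1) → ℝ)‖ ≤ M ∧
            |Q (T (Fin.cons x y))| ≤ t := hx
        apply hy
        rw [Metric.mem_closedBall, dist_zero_right]
        refine (pi_norm_le_iff_of_nonneg hM0).mpr fun i => ?_
        calc ‖y i‖ = ‖(Fin.cons x y : Fin (n + 1) → ℝ) i.succ‖ := by rw [Fin.cons_succ]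
          _ ≤ ‖(Fin.cons x y : Fin (n + 1) → ℝ)‖ := norm_le_pi_norm _ _
          _ ≤ M := hx'.1
      rw [hempty, measure_empty]
  -- integrate
  have hvol3 : volume A' ≤ ENNReal.ofReal (4 * Real.sqrt (t / |A|)) *
      volume (Metric.closedBall (0 : Fin n → ℝ) M) := by
    rw [hvol2]
    refine le_trans (lintegral_mono fun y => hsec y) ?_
    rw [lintegral_indicator Metric.isClosed_closedBall.measurableSet, setLIntegral_const]
  -- assemble
  rw [hvol1]
  have hball : volume (Metric.closedBall (0 : Fin n → ℝ) M) = ENNReal.ofReal K := by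
    rw [hK, ENNReal.ofReal_toReal hKfin]
  calc ENNReal.ofReal D * volume (T ⁻¹' {v : Fin (n + 1) → ℝ | ‖v‖ ≤ 1 ∧ |Q v| ≤ t})
      ≤ ENNReal.ofReal D * volume A' := by
        exact mul_le_mul_right (measure_mono hsub1) _
    _ ≤ ENNReal.ofReal D * (ENNReal.ofReal (4 * Real.sqrt (t / |A|)) * ENNReal.ofReal K) := by
        rw [← hball]; exact mul_le_mul_right hvol3 _
    _ = ENNReal.ofReal (D * (4 * Real.sqrt (t / |A|) * K)) := by
        rw [← ENNReal.ofReal_mul (by positivity), ← ENNReal.ofReal_mul hD0]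
    _ ≤ ENNReal.ofReal ((D * 4 * K / Real.sqrt |A| + 1) * t ^ ((1 : ℝ) / 2)) := by
        apply ENNReal.ofReal_le_ofReal
        rw [show t ^ ((1 : ℝ) / 2) = Real.sqrt t from (Real.sqrt_eq_rpow t).symm,
          Real.sqrt_div ht.le]
        have hne : Real.sqrt |A| ≠ 0 := hAs.ne'
        have heq : D * (4 * (Real.sqrt t / Real.sqrt |A|) * K)
            = D * 4 * K / Real.sqrt |A| * Real.sqrt t := by field_simp
        rw [heq]
        nlinarith [Real.sqrt_nonneg t, hD0, hK0, hAs,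
          div_nonneg (by positivity : (0:ℝ) ≤ D * 4 * K) hAs.le]
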